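/- For all real c, the variance of the shifted asymmetric loss, Var := ∫ L(z+c)²·f(z) dz − (∫ L(z+c)·f(z) dz)², equals (k₁+k₂)²·c²/4 + ((k₁²−k₂²)·b·c/(2·Γ(a)))·Γ-upper(2a, |c/b|^{1/a}) − ((k₁+k₂)²·b·|c|/(2·Γ(a)²))·γ(a, |c/b|^{1/a})·Γ-upper(2a, |c/b|^{1/a}) − ((k₁+k₂)²·c²/(4·Γ(a)²))·γ(a, |c/b|^{1/a})² − ((k₁+k₂)²·b²/(4·Γ(a)²))·Γ-upper(2a, |c/b|^{1/a})² + (k₁²+k₂²)·b²·Γ(3a)/(2·Γ(a)) + Sgn(c)·((k₁²−k₂²)·b²/(2·Γ(a)))·γ(3a, |c/b|^{1/a}). -/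

import Mathlib

open Real MeasureTheory Filter

/-- The asymmetric loss function. -/
noncomputable def asymLoss (k₁ k₂ z : ℝ) : ℝ := if 0 ≤ z then k₁ * z else -k₂ * z

/-- The generalized Gaussian density with mean zero. -/
noncomputable def genGauss (a b z : ℝ) : ℝ :=
  (2 * a * b * Real.Gamma a)⁻¹ * Real.exp (-(|z / b| ^ (1 / a)))

/-- The lower incomplete gamma function. -/
noncomputable def lowerGamma (p x : ℝ) : ℝ := ∫ t in (0:ℝ)..x, t ^ (p - 1) * Real.exp (-t)

/-- The upper incomplete gamma function. -/
noncomputable def upperGamma (p x : ℝ) : ℝ := ∫ t in Set.Ioi x, t ^ (p - 1) * Real.exp (-t)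

/-- The sign function used in the paper: `1` for `c ≥ 0`, `-1` for `c < 0`. -/
noncomputable def Sgn (c : ℝ) : ℝ := if 0 ≤ c then 1 else -1

open Set

lemma gammaIntegrand_integrableOn {p x : ℝ} (hp : 0 < p) (hx : 0 ≤ x) :
    IntegrableOn (fun t : ℝ => t ^ (p - 1) * Real.exp (-t)) (Ioi x) :=
  ((Real.GammaIntegral_convergent hp).mono_set (Ioi_subset_Ioi hx)).congr_fun
    (fun t _ => mul_comm _ _) measurableSet_Ioi

lemma upperGamma_zero {p : ℝ} (hp : 0 < p) : upperGamma p 0 = Real.Gamma p := by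
  rw [Real.Gamma_eq_integral hp]
  exact setIntegral_congr_fun measurableSet_Ioi fun t _ => mul_comm _ _

lemma lower_add_upper {p x : ℝ} (hp : 0 < p) (hx : 0 ≤ x) :
    lowerGamma p x + upperGamma p x = Real.Gamma p := by
  have h1 : IntegrableOn (fun t : ℝ => t ^ (p - 1) * Real.exp (-t)) (Ioc 0 x) :=
    (gammaIntegrand_integrableOn hp le_rfl).mono_set Ioc_subset_Ioi_self
  have h2 := gammaIntegrand_integrableOn (x := x) hp hx
  have key : ∫ t in Ioi (0:ℝ), t ^ (p - 1) * Real.exp (-t) = lowerGamma p x + upperGamma p x := by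
    rw [← Ioc_union_Ioi_eq_Ioi hx,
      setIntegral_union (Ioc_disjoint_Ioi le_rfl) measurableSet_Ioi h1 h2]
    unfold lowerGamma upperGamma
    rw [intervalIntegral.integral_of_le hx]
  rw [← key, Real.Gamma_eq_integral hp]
  exact setIntegral_congr_fun measurableSet_Ioi fun t _ => mul_comm _ _

lemma image_rpow_Ioi {a b : ℝ} (ha : 0 < a) (hb : 0 < b) {x : ℝ} (hx : 0 ≤ x) :
    (fun t : ℝ => b * t ^ a) '' Ioi x = Ioi (b * x ^ a) := by
  ext y
  simp only [mem_image, mem_Ioi]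
  constructor
  · rintro ⟨t, ht, rfl⟩
    exact mul_lt_mul_of_pos_left (Real.rpow_lt_rpow hx ht ha) hb
  · intro hy
    have hxa : (0:ℝ) ≤ b * x ^ a := by positivity
    have hyb : x ^ a < y / b := (lt_div_iff₀ hb).mpr (by rw [mul_comm]; linarith)
    refine ⟨(y / b) ^ (1 / a), ?_, ?_⟩
    · have h := Real.rpow_lt_rpow (Real.rpow_nonneg hx a) hyb (one_div_pos.mpr ha)
      rw [one_div] at h ⊢
      rwa [Real.rpow_rpow_inv hx ha.ne'] at h
    · rw [one_div, Real.rpow_inv_rpow (le_trans (Real.rpow_nonneg hx a) hyb.le) ha.ne',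
        mul_comm, div_mul_cancel₀ _ hb.ne']

lemma moment_Ioi {a b : ℝ} (ha : 0 < a) (hb : 0 < b) (n : ℕ) {c : ℝ} (hc : 0 ≤ c) :
    IntegrableOn (fun z : ℝ => z ^ n * Real.exp (-(|z / b| ^ (1 / a)))) (Ioi c) ∧
      ∫ z in Ioi c, z ^ n * Real.exp (-(|z / b| ^ (1 / a)))
        = a * b ^ (n + 1) * upperGamma (((n : ℝ) + 1) * a) ((c / b) ^ (1 / a)) := by
  set x : ℝ := (c / b) ^ (1 / a) with hxdef
  have hx : 0 ≤ x := Real.rpow_nonneg (div_nonneg hc hb.le) _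
  have hbx : b * x ^ a = c := by
    rw [hxdef, one_div, Real.rpow_inv_rpow (div_nonneg hc hb.le) ha.ne', mul_comm,
      div_mul_cancel₀ _ hb.ne']
  have hderiv : ∀ t ∈ Ioi x, HasDerivWithinAt (fun t : ℝ => b * t ^ a)
      (b * (a * t ^ (a - 1))) (Ioi x) t := fun t ht =>
    ((Real.hasDerivAt_rpow_const (p := a) (Or.inl (lt_of_le_of_lt hx ht).ne')).const_mul
      b).hasDerivWithinAt
  have hmono : StrictMonoOn (fun t : ℝ => b * t ^ a) (Ioi x) := fun s hs t _ hst =>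
    mul_lt_mul_of_pos_left (Real.rpow_lt_rpow (hx.trans (le_of_lt hs)) hst ha) hb
  have key := integral_image_eq_integral_abs_deriv_smul measurableSet_Ioi hderiv hmono.injOn
      (fun z : ℝ => z ^ n * Real.exp (-(|z / b| ^ (1 / a))))
  have keyInt := integrableOn_image_iff_integrableOn_abs_deriv_smul measurableSet_Ioi hderiv
      hmono.injOn (fun z : ℝ => z ^ n * Real.exp (-(|z / b| ^ (1 / a))))
  rw [image_rpow_Ioi ha hb hx, hbx] at key keyInt
  have hp : 0 < ((n : ℝ) + 1) * a := by positivity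
  have hptwise : ∀ t ∈ Ioi x,
      |b * (a * t ^ (a - 1))| • ((b * t ^ a) ^ n * Real.exp (-(|b * t ^ a / b| ^ (1 / a))))
        = a * b ^ (n + 1) * (t ^ (((n:ℝ) + 1) * a - 1) * Real.exp (-t)) := by
    intro t ht
    have ht0 : 0 < t := lt_of_le_of_lt hx ht
    have h1 : b * t ^ a / b = t ^ a := by
      rw [mul_comm, mul_div_assoc, div_self hb.ne', mul_one]
    have h2 : |t ^ a| = t ^ a := abs_of_nonneg (Real.rpow_nonneg ht0.le a)
    have h3 : (t ^ a) ^ (1 / a) = t := by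
      rw [one_div, Real.rpow_rpow_inv ht0.le ha.ne']
    have h4 : (b * t ^ a) ^ n = b ^ n * t ^ (a * (n:ℝ)) := by
      rw [mul_pow, ← Real.rpow_natCast (t ^ a) n, ← Real.rpow_mul ht0.le]
    have h5 : |b * (a * t ^ (a - 1))| = b * (a * t ^ (a - 1)) :=
      abs_of_pos (by positivity)
    have h6 : t ^ (a - 1) * t ^ (a * (n:ℝ)) = t ^ (((n:ℝ) + 1) * a - 1) := by
      rw [← Real.rpow_add ht0]; congr 1; ring
    rw [smul_eq_mul, h1, h2, h3, h4, h5, ← h6]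
    ring
  constructor
  · rw [keyInt]
    exact MeasureTheory.IntegrableOn.congr_fun
      ((gammaIntegrand_integrableOn hp hx).const_mul (a * b ^ (n + 1)))
      (fun t ht => (hptwise t ht).symm) measurableSet_Ioi
  · rw [key]
    unfold upperGamma
    rw [← integral_const_mul]
    exact setIntegral_congr_fun measurableSet_Ioi hptwise

lemma integrableOn_Iic_neg {g : ℝ → ℝ} (h : IntegrableOn (fun z => g (-z)) (Set.Ici (0:ℝ))) :
    IntegrableOn g (Set.Iic (0:ℝ)) := by
  have h_map : ((volume : Measure ℝ).restrict (Set.Ici (0:ℝ))).map Neg.neg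
      = volume.restrict (Set.Iic 0) := by
    conv_rhs => rw [← Measure.map_neg_eq_self (volume : Measure ℝ),
      measurableEmbedding_neg.restrict_map]
    simp
  rw [IntegrableOn, ← h_map, measurableEmbedding_neg.integrable_map_iff]
  exact h

lemma moment_total {a b : ℝ} (ha : 0 < a) (hb : 0 < b) (n : ℕ) :
    Integrable (fun z : ℝ => z ^ n * Real.exp (-(|z / b| ^ (1 / a)))) ∧
      ∫ z : ℝ, z ^ n * Real.exp (-(|z / b| ^ (1 / a)))
        = (1 + (-1:ℝ) ^ n) * (a * b ^ (n + 1) * Real.Gamma (((n:ℝ) + 1) * a)) := by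
  obtain ⟨hIoi, hIoiV⟩ := moment_Ioi ha hb n (le_refl (0:ℝ))
  have harg : ((0:ℝ) / b) ^ (1 / a) = 0 := by
    rw [zero_div, Real.zero_rpow (one_div_ne_zero ha.ne')]
  have hp : (0:ℝ) < ((n:ℝ) + 1) * a := by positivity
  rw [harg, upperGamma_zero hp] at hIoiV
  have hneg : ∀ z : ℝ, ((-z) ^ n * Real.exp (-(|(-z) / b| ^ (1 / a))))
      = (-1:ℝ) ^ n * (z ^ n * Real.exp (-(|z / b| ^ (1 / a)))) := by
    intro z
    rw [neg_div, abs_neg, neg_pow]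
    ring
  have hIic : IntegrableOn (fun z : ℝ => z ^ n * Real.exp (-(|z / b| ^ (1 / a)))) (Iic (0:ℝ)) := by
    apply integrableOn_Iic_neg
    rw [integrableOn_Ici_iff_integrableOn_Ioi]
    exact MeasureTheory.IntegrableOn.congr_fun (hIoi.const_mul ((-1:ℝ) ^ n))
      (fun z _ => (hneg z).symm) measurableSet_Ioi
  have hIicV : ∫ z in Iic (0:ℝ), z ^ n * Real.exp (-(|z / b| ^ (1 / a)))
      = (-1:ℝ) ^ n * (a * b ^ (n + 1) * Real.Gamma (((n:ℝ) + 1) * a)) := by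
    have hcn := integral_comp_neg_Ioi (0:ℝ)
      (fun z : ℝ => z ^ n * Real.exp (-(|z / b| ^ (1 / a))))
    rw [neg_zero] at hcn
    rw [← hcn]
    calc ∫ z in Ioi (0:ℝ), (-z) ^ n * Real.exp (-(|(-z) / b| ^ (1 / a)))
        = ∫ z in Ioi (0:ℝ), (-1:ℝ) ^ n * (z ^ n * Real.exp (-(|z / b| ^ (1 / a)))) :=
          setIntegral_congr_fun measurableSet_Ioi fun z _ => hneg z
      _ = (-1:ℝ) ^ n * ∫ z in Ioi (0:ℝ), z ^ n * Real.exp (-(|z / b| ^ (1 / a))) :=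
          integral_const_mul _ _
      _ = (-1:ℝ) ^ n * (a * b ^ (n + 1) * Real.Gamma (((n:ℝ) + 1) * a)) := by rw [hIoiV]
  have hint : Integrable (fun z : ℝ => z ^ n * Real.exp (-(|z / b| ^ (1 / a)))) := by
    rw [← integrableOn_univ, ← Set.Iic_union_Ioi (a := (0:ℝ))]
    exact hIic.union hIoi
  refine ⟨hint, ?_⟩
  rw [← intervalIntegral.integral_Iic_add_Ioi hIic hIoi, hIicV, hIoiV]
  ring

lemma asymLoss_of_nonneg {k₁ k₂ w : ℝ} (h : 0 ≤ w) : asymLoss k₁ k₂ w = k₁ * w := by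
  unfold asymLoss; rw [if_pos h]

lemma asymLoss_of_nonpos {k₁ k₂ w : ℝ} (h : w ≤ 0) : asymLoss k₁ k₂ w = -k₂ * w := by
  unfold asymLoss
  split_ifs with h'
  · have hw : w = 0 := le_antisymm h h'
    rw [hw]; ring
  · rfl

lemma abs_asymLoss_le {k₁ k₂ : ℝ} (hk₁ : 0 < k₁) (hk₂ : 0 < k₂) (w : ℝ) :
    |asymLoss k₁ k₂ w| ≤ (k₁ + k₂) * |w| := by
  unfold asymLoss
  split_ifs with h
  · rw [abs_mul, abs_of_pos hk₁]
    nlinarith [abs_nonneg w]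
  · rw [abs_mul, abs_neg, abs_of_pos hk₂]
    nlinarith [abs_nonneg w]

lemma asymLoss_neg (k₁ k₂ w : ℝ) : asymLoss k₁ k₂ (-w) = asymLoss k₂ k₁ w := by
  unfold asymLoss
  rcases lt_trichotomy w 0 with h | h | h
  · rw [if_pos (by linarith), if_neg (not_le.mpr h)]; ring
  · rw [h]; norm_num
  · rw [if_neg (not_le.mpr (by linarith : -w < 0)), if_pos h.le]; ring

lemma genGauss_neg (a b z : ℝ) : genGauss a b (-z) = genGauss a b z := by
  unfold genGauss; rw [neg_div, abs_neg]

lemma measurable_asymLoss (k₁ k₂ : ℝ) : Measurable (asymLoss k₁ k₂) := by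
  unfold asymLoss
  exact Measurable.ite (measurableSet_le measurable_const measurable_id)
    (measurable_id.const_mul k₁) (measurable_id.const_mul (-k₂))

lemma continuous_genGauss {a : ℝ} (b : ℝ) (ha : 0 < a) : Continuous (genGauss a b) := by
  unfold genGauss
  exact continuous_const.mul (Real.continuous_exp.comp (((continuous_id.div_const b).abs).rpow_const
    (fun z => Or.inr (by positivity))).neg)

set_option maxHeartbeats 2000000 in
lemma main_nonneg (a b k₁ k₂ : ℝ) (ha : 0 < a) (hb : 0 < b)
    (hk₁ : 0 < k₁) (hk₂ : 0 < k₂) {c : ℝ} (hc : 0 ≤ c) :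
    (∫ z, (asymLoss k₁ k₂ (z + c)) ^ 2 * genGauss a b z)
      - (∫ z, asymLoss k₁ k₂ (z + c) * genGauss a b z) ^ 2 =
      (k₁ + k₂) ^ 2 * c ^ 2 / 4
      + (k₁ ^ 2 - k₂ ^ 2) * b * c / (2 * Real.Gamma a)
          * upperGamma (2 * a) (|c / b| ^ (1 / a))
      - (k₁ + k₂) ^ 2 * b * |c| / (2 * Real.Gamma a ^ 2)
          * lowerGamma a (|c / b| ^ (1 / a)) * upperGamma (2 * a) (|c / b| ^ (1 / a))
      - (k₁ + k₂) ^ 2 * c ^ 2 / (4 * Real.Gamma a ^ 2)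
          * (lowerGamma a (|c / b| ^ (1 / a))) ^ 2
      - (k₁ + k₂) ^ 2 * b ^ 2 / (4 * Real.Gamma a ^ 2)
          * (upperGamma (2 * a) (|c / b| ^ (1 / a))) ^ 2
      + (k₁ ^ 2 + k₂ ^ 2) * b ^ 2 * Real.Gamma (3 * a) / (2 * Real.Gamma a)
      + Sgn c * ((k₁ ^ 2 - k₂ ^ 2) * b ^ 2 / (2 * Real.Gamma a))
          * lowerGamma (3 * a) (|c / b| ^ (1 / a)) := by
  have hG : 0 < Real.Gamma a := Real.Gamma_pos_of_pos ha
  have hxabs : |c / b| = c / b := abs_of_nonneg (div_nonneg hc hb.le)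
  have hx : 0 ≤ |c / b| ^ (1 / a) := Real.rpow_nonneg (abs_nonneg _) _
  obtain ⟨hA0i, hA0⟩ := moment_Ioi ha hb 0 hc
  obtain ⟨hA1i, hA1⟩ := moment_Ioi ha hb 1 hc
  obtain ⟨hA2i, hA2⟩ := moment_Ioi ha hb 2 hc
  rw [← hxabs] at hA0 hA1 hA2
  obtain ⟨hT0i, hT0⟩ := moment_total ha hb 0
  obtain ⟨hT1i, hT1⟩ := moment_total ha hb 1
  obtain ⟨hT2i, hT2⟩ := moment_total ha hb 2
  have e0 : (((0:ℕ):ℝ) + 1) * a = a := by norm_num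
  have e1 : (((1:ℕ):ℝ) + 1) * a = 2 * a := by norm_num
  have e2 : (((2:ℕ):ℝ) + 1) * a = 3 * a := by norm_num
  rw [e0] at hA0 hT0
  rw [e1] at hA1 hT1
  rw [e2] at hA2 hT2
  have hgen : ∀ z : ℝ, genGauss a b z
      = (2 * a * b * Real.Gamma a)⁻¹ * Real.exp (-(|z / b| ^ (1 / a))) := fun z => rfl
  set N : ℝ := (2 * a * b * Real.Gamma a)⁻¹ with hNdef
  -- P and Q
  have hPeq : (fun z : ℝ => (z + c) * genGauss a b z)
      = fun z : ℝ => N * (z ^ 1 * Real.exp (-(|z / b| ^ (1 / a))))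
          + c * N * (z ^ 0 * Real.exp (-(|z / b| ^ (1 / a)))) := by
    funext z; rw [hgen z]; ring
  have hPint : Integrable (fun z : ℝ => (z + c) * genGauss a b z) := by
    rw [hPeq]; exact (hT1i.const_mul N).add (hT0i.const_mul (c * N))
  have hPval : ∫ z : ℝ, (z + c) * genGauss a b z
      = N * ((1 + (-1:ℝ) ^ 1) * (a * b ^ (1 + 1) * Real.Gamma (2 * a)))
        + c * N * ((1 + (-1:ℝ) ^ 0) * (a * b ^ (0 + 1) * Real.Gamma a)) := by
    rw [hPeq, integral_add (hT1i.const_mul N) (hT0i.const_mul (c * N)),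
      integral_const_mul, integral_const_mul, hT0, hT1]
  have hQeq : (fun z : ℝ => (z + c) ^ 2 * genGauss a b z)
      = fun z : ℝ => (N * (z ^ 2 * Real.exp (-(|z / b| ^ (1 / a))))
          + 2 * c * N * (z ^ 1 * Real.exp (-(|z / b| ^ (1 / a)))))
          + c ^ 2 * N * (z ^ 0 * Real.exp (-(|z / b| ^ (1 / a)))) := by
    funext z; rw [hgen z]; ring
  have hQint : Integrable (fun z : ℝ => (z + c) ^ 2 * genGauss a b z) := by
    rw [hQeq]
    exact ((hT2i.const_mul N).add (hT1i.const_mul (2 * c * N))).add (hT0i.const_mul (c ^ 2 * N))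
  have hQval : ∫ z : ℝ, (z + c) ^ 2 * genGauss a b z
      = (N * ((1 + (-1:ℝ) ^ 2) * (a * b ^ (2 + 1) * Real.Gamma (3 * a)))
          + 2 * c * N * ((1 + (-1:ℝ) ^ 1) * (a * b ^ (1 + 1) * Real.Gamma (2 * a))))
          + c ^ 2 * N * ((1 + (-1:ℝ) ^ 0) * (a * b ^ (0 + 1) * Real.Gamma a)) := by
    have hsum : Integrable (fun z : ℝ => N * (z ^ 2 * Real.exp (-(|z / b| ^ (1 / a))))
        + 2 * c * N * (z ^ 1 * Real.exp (-(|z / b| ^ (1 / a))))) :=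
      (hT2i.const_mul N).add (hT1i.const_mul (2 * c * N))
    rw [hQeq, integral_add hsum (hT0i.const_mul (c ^ 2 * N)),
      integral_add (hT2i.const_mul N) (hT1i.const_mul (2 * c * N)),
      integral_const_mul, integral_const_mul, integral_const_mul, hT0, hT1, hT2]
  -- reflected pieces on Iic (-c)
  have hSP : ∫ z in Iic (-c), (z + c) * genGauss a b z
      = c * N * (a * b ^ (0 + 1) * upperGamma a (|c / b| ^ (1 / a)))
        - N * (a * b ^ (1 + 1) * upperGamma (2 * a) (|c / b| ^ (1 / a))) := by
    rw [← integral_comp_neg_Ioi]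
    have hcong : ∀ z ∈ Ioi c, (-z + c) * genGauss a b (-z)
        = c * N * (z ^ 0 * Real.exp (-(|z / b| ^ (1 / a))))
          + (-N) * (z ^ 1 * Real.exp (-(|z / b| ^ (1 / a)))) := by
      intro z _
      rw [genGauss_neg, hgen z]; ring
    calc ∫ z in Ioi c, (-z + c) * genGauss a b (-z)
        = ∫ z in Ioi c, (c * N * (z ^ 0 * Real.exp (-(|z / b| ^ (1 / a))))
            + (-N) * (z ^ 1 * Real.exp (-(|z / b| ^ (1 / a))))) :=
          setIntegral_congr_fun measurableSet_Ioi hcong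
      _ = c * N * (∫ z in Ioi c, z ^ 0 * Real.exp (-(|z / b| ^ (1 / a))))
            + (-N) * ∫ z in Ioi c, z ^ 1 * Real.exp (-(|z / b| ^ (1 / a))) := by
          rw [integral_add (hA0i.const_mul _) (hA1i.const_mul _),
            integral_const_mul, integral_const_mul]
      _ = _ := by rw [hA0, hA1]; ring
  have hSQ : ∫ z in Iic (-c), (z + c) ^ 2 * genGauss a b z
      = N * (a * b ^ (2 + 1) * upperGamma (3 * a) (|c / b| ^ (1 / a)))
        - 2 * c * N * (a * b ^ (1 + 1) * upperGamma (2 * a) (|c / b| ^ (1 / a)))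
        + c ^ 2 * N * (a * b ^ (0 + 1) * upperGamma a (|c / b| ^ (1 / a))) := by
    rw [← integral_comp_neg_Ioi]
    have hcong : ∀ z ∈ Ioi c, (-z + c) ^ 2 * genGauss a b (-z)
        = (N * (z ^ 2 * Real.exp (-(|z / b| ^ (1 / a))))
            + (-(2 * c * N)) * (z ^ 1 * Real.exp (-(|z / b| ^ (1 / a)))))
          + c ^ 2 * N * (z ^ 0 * Real.exp (-(|z / b| ^ (1 / a)))) := by
      intro z _
      rw [genGauss_neg, hgen z]; ring
    calc ∫ z in Ioi c, (-z + c) ^ 2 * genGauss a b (-z)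
        = ∫ z in Ioi c, ((N * (z ^ 2 * Real.exp (-(|z / b| ^ (1 / a))))
            + (-(2 * c * N)) * (z ^ 1 * Real.exp (-(|z / b| ^ (1 / a)))))
          + c ^ 2 * N * (z ^ 0 * Real.exp (-(|z / b| ^ (1 / a))))) :=
          setIntegral_congr_fun measurableSet_Ioi hcong
      _ = (N * (∫ z in Ioi c, z ^ 2 * Real.exp (-(|z / b| ^ (1 / a))))
            + (-(2 * c * N)) * (∫ z in Ioi c, z ^ 1 * Real.exp (-(|z / b| ^ (1 / a)))))
          + c ^ 2 * N * ∫ z in Ioi c, z ^ 0 * Real.exp (-(|z / b| ^ (1 / a))) := by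
          have hsum : IntegrableOn (fun z : ℝ => N * (z ^ 2 * Real.exp (-(|z / b| ^ (1 / a))))
              + (-(2 * c * N)) * (z ^ 1 * Real.exp (-(|z / b| ^ (1 / a))))) (Ioi c) :=
            (hA2i.const_mul N).add (hA1i.const_mul (-(2 * c * N)))
          rw [integral_add hsum (hA0i.const_mul _),
            integral_add (hA2i.const_mul _) (hA1i.const_mul _),
            integral_const_mul, integral_const_mul, integral_const_mul]
      _ = _ := by rw [hA0, hA1, hA2]; ring
  -- integrability of the loss integrands
  have hcont := continuous_genGauss b ha
  have hmAsym : Measurable (fun z : ℝ => asymLoss k₁ k₂ (z + c)) :=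
    (measurable_asymLoss k₁ k₂).comp (measurable_id.add_const c)
  have hI1 : Integrable (fun z : ℝ => asymLoss k₁ k₂ (z + c) * genGauss a b z) := by
    refine (hPint.abs.const_mul (k₁ + k₂)).mono'
      ((hmAsym.mul hcont.measurable).aestronglyMeasurable) (ae_of_all _ fun z => ?_)
    simp only [Real.norm_eq_abs, abs_mul]
    calc |asymLoss k₁ k₂ (z + c)| * |genGauss a b z|
        ≤ ((k₁ + k₂) * |z + c|) * |genGauss a b z| :=
          mul_le_mul_of_nonneg_right (abs_asymLoss_le hk₁ hk₂ _) (abs_nonneg _)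
      _ = (k₁ + k₂) * (|z + c| * |genGauss a b z|) := by ring
  have hI2 : Integrable (fun z : ℝ => asymLoss k₁ k₂ (z + c) ^ 2 * genGauss a b z) := by
    refine (hQint.abs.const_mul ((k₁ + k₂) ^ 2)).mono'
      (((hmAsym.pow_const 2).mul hcont.measurable).aestronglyMeasurable)
      (ae_of_all _ fun z => ?_)
    simp only [Real.norm_eq_abs, abs_mul, abs_pow]
    calc |asymLoss k₁ k₂ (z + c)| ^ 2 * |genGauss a b z|
        ≤ ((k₁ + k₂) * |z + c|) ^ 2 * |genGauss a b z| := by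
          have := abs_asymLoss_le hk₁ hk₂ (z + c)
          have h2 : |asymLoss k₁ k₂ (z + c)| ^ 2 ≤ ((k₁ + k₂) * |z + c|) ^ 2 := by
            apply pow_le_pow_left₀ (abs_nonneg _) this
          exact mul_le_mul_of_nonneg_right h2 (abs_nonneg _)
      _ = (k₁ + k₂) ^ 2 * (|z + c| ^ 2 * |genGauss a b z|) := by ring
  -- splitting
  have key1 : ∫ z : ℝ, asymLoss k₁ k₂ (z + c) * genGauss a b z
      = k₁ * (∫ z : ℝ, (z + c) * genGauss a b z)
        - (k₁ + k₂) * ∫ z in Iic (-c), (z + c) * genGauss a b z := by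
    have hsplit := intervalIntegral.integral_Iic_add_Ioi (b := -c) (μ := volume)
      hI1.integrableOn hI1.integrableOn
    have hsplitP := intervalIntegral.integral_Iic_add_Ioi (b := -c) (μ := volume)
      hPint.integrableOn hPint.integrableOn
    have hIic1 : ∫ z in Iic (-c), asymLoss k₁ k₂ (z + c) * genGauss a b z
        = -k₂ * ∫ z in Iic (-c), (z + c) * genGauss a b z := by
      rw [← integral_const_mul]
      refine setIntegral_congr_fun measurableSet_Iic fun z hz => ?_
      rw [asymLoss_of_nonpos (by simp only [mem_Iic] at hz; linarith : z + c ≤ 0)]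
      ring
    have hIoi1 : ∫ z in Ioi (-c), asymLoss k₁ k₂ (z + c) * genGauss a b z
        = k₁ * ∫ z in Ioi (-c), (z + c) * genGauss a b z := by
      rw [← integral_const_mul]
      refine setIntegral_congr_fun measurableSet_Ioi fun z hz => ?_
      rw [asymLoss_of_nonneg (by simp only [mem_Ioi] at hz; linarith : 0 ≤ z + c)]
      ring
    have hP' : ∫ z in Ioi (-c), (z + c) * genGauss a b z
        = (∫ z : ℝ, (z + c) * genGauss a b z) - ∫ z in Iic (-c), (z + c) * genGauss a b z := by
      linarith
    rw [← hsplit, hIic1, hIoi1, hP']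
    ring
  have key2 : ∫ z : ℝ, asymLoss k₁ k₂ (z + c) ^ 2 * genGauss a b z
      = k₁ ^ 2 * (∫ z : ℝ, (z + c) ^ 2 * genGauss a b z)
        - (k₁ ^ 2 - k₂ ^ 2) * ∫ z in Iic (-c), (z + c) ^ 2 * genGauss a b z := by
    have hsplit := intervalIntegral.integral_Iic_add_Ioi (b := -c) (μ := volume)
      hI2.integrableOn hI2.integrableOn
    have hsplitQ := intervalIntegral.integral_Iic_add_Ioi (b := -c) (μ := volume)
      hQint.integrableOn hQint.integrableOn
    have hIic1 : ∫ z in Iic (-c), asymLoss k₁ k₂ (z + c) ^ 2 * genGauss a b z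
        = k₂ ^ 2 * ∫ z in Iic (-c), (z + c) ^ 2 * genGauss a b z := by
      rw [← integral_const_mul]
      refine setIntegral_congr_fun measurableSet_Iic fun z hz => ?_
      rw [asymLoss_of_nonpos (by simp only [mem_Iic] at hz; linarith : z + c ≤ 0)]
      ring
    have hIoi1 : ∫ z in Ioi (-c), asymLoss k₁ k₂ (z + c) ^ 2 * genGauss a b z
        = k₁ ^ 2 * ∫ z in Ioi (-c), (z + c) ^ 2 * genGauss a b z := by
      rw [← integral_const_mul]
      refine setIntegral_congr_fun measurableSet_Ioi fun z hz => ?_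
      rw [asymLoss_of_nonneg (by simp only [mem_Ioi] at hz; linarith : 0 ≤ z + c)]
      ring
    have hQ' : ∫ z in Ioi (-c), (z + c) ^ 2 * genGauss a b z
        = (∫ z : ℝ, (z + c) ^ 2 * genGauss a b z)
          - ∫ z in Iic (-c), (z + c) ^ 2 * genGauss a b z := by
      linarith
    rw [← hsplit, hIic1, hIoi1, hQ']
    ring
  -- finish
  have hSgn : Sgn c = 1 := if_pos hc
  have hcabs : |c| = c := abs_of_nonneg hc
  have hl1 := lower_add_upper ha hx
  have hl3 := lower_add_upper (p := 3 * a) (by positivity) hx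
  have hl1' : lowerGamma a (|c / b| ^ (1 / a))
      = Real.Gamma a - upperGamma a (|c / b| ^ (1 / a)) := by linarith
  have hl3' : lowerGamma (3 * a) (|c / b| ^ (1 / a))
      = Real.Gamma (3 * a) - upperGamma (3 * a) (|c / b| ^ (1 / a)) := by linarith
  rw [key1, key2, hPval, hQval, hSP, hSQ, hSgn, hcabs, hl1', hl3', hNdef]
  have h2abG : (2 * a * b * Real.Gamma a) ≠ 0 := by positivity
  field_simp
  ring

theorem variance_shifted_loss (a b k₁ k₂ : ℝ) (ha : 0 < a) (hb : 0 < b)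
    (hk₁ : 0 < k₁) (hk₂ : 0 < k₂) (c : ℝ) :
    (∫ z, (asymLoss k₁ k₂ (z + c)) ^ 2 * genGauss a b z)
      - (∫ z, asymLoss k₁ k₂ (z + c) * genGauss a b z) ^ 2 =
      (k₁ + k₂) ^ 2 * c ^ 2 / 4
      + (k₁ ^ 2 - k₂ ^ 2) * b * c / (2 * Real.Gamma a)
          * upperGamma (2 * a) (|c / b| ^ (1 / a))
      - (k₁ + k₂) ^ 2 * b * |c| / (2 * Real.Gamma a ^ 2)
          * lowerGamma a (|c / b| ^ (1 / a)) * upperGamma (2 * a) (|c / b| ^ (1 / a))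
      - (k₁ + k₂) ^ 2 * c ^ 2 / (4 * Real.Gamma a ^ 2)
          * (lowerGamma a (|c / b| ^ (1 / a))) ^ 2
      - (k₁ + k₂) ^ 2 * b ^ 2 / (4 * Real.Gamma a ^ 2)
          * (upperGamma (2 * a) (|c / b| ^ (1 / a))) ^ 2
      + (k₁ ^ 2 + k₂ ^ 2) * b ^ 2 * Real.Gamma (3 * a) / (2 * Real.Gamma a)
      + Sgn c * ((k₁ ^ 2 - k₂ ^ 2) * b ^ 2 / (2 * Real.Gamma a))
          * lowerGamma (3 * a) (|c / b| ^ (1 / a)) := by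
  rcases le_or_gt 0 c with hc | hc
  · exact main_nonneg a b k₁ k₂ ha hb hk₁ hk₂ hc
  · have hc' : 0 ≤ -c := by linarith
    have hpt : ∀ z : ℝ, asymLoss k₂ k₁ (-z + -c) * genGauss a b (-z)
        = asymLoss k₁ k₂ (z + c) * genGauss a b z := by
      intro z
      rw [genGauss_neg, show -z + -c = -(z + c) by ring, asymLoss_neg]
    have h1 : (∫ z, asymLoss k₁ k₂ (z + c) * genGauss a b z)
        = ∫ z, asymLoss k₂ k₁ (z + -c) * genGauss a b z := by
      rw [← integral_neg_eq_self (fun z : ℝ => asymLoss k₂ k₁ (z + -c) * genGauss a b z)]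
      congr 1
      funext z
      exact (hpt z).symm
    have h2 : (∫ z, (asymLoss k₁ k₂ (z + c)) ^ 2 * genGauss a b z)
        = ∫ z, (asymLoss k₂ k₁ (z + -c)) ^ 2 * genGauss a b z := by
      rw [← integral_neg_eq_self (fun z : ℝ => asymLoss k₂ k₁ (z + -c) ^ 2 * genGauss a b z)]
      congr 1
      funext z
      have := hpt z
      show asymLoss k₁ k₂ (z + c) ^ 2 * genGauss a b z
          = asymLoss k₂ k₁ (-z + -c) ^ 2 * genGauss a b (-z)
      rw [genGauss_neg, show -z + -c = -(z + c) by ring, asymLoss_neg]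
    rw [h1, h2, main_nonneg a b k₂ k₁ ha hb hk₂ hk₁ hc']
    have habs1 : |-c / b| = |c / b| := by rw [neg_div, abs_neg]
    have habs2 : |-c| = -c := abs_of_nonneg hc'
    have habs3 : |c| = -c := abs_of_neg hc
    have hS1 : Sgn (-c) = 1 := if_pos hc'
    have hS2 : Sgn c = -1 := if_neg (not_le.mpr hc)
    rw [habs1, habs2, habs3, hS1, hS2]
    ring
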